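/- Let d ∈ ℕ with d ≥ 1, let Δ > 0 and μ > 0, and set σ = Δ/μ. Let Φ denote the cumulative distribution function of the standard Gaussian measure N(0, 1), i.e., Φ(t) = N(0,1)((−∞, t]). For a ∈ ℝ^d let γ_a = ⊗_i N(a_i, σ²) be the product Gaussian measure on ℝ^d. Then for all a, b ∈ ℝ^d with ‖a − b‖₂ ≤ Δ, every ε ≥ 0, and every measurable set S ⊆ ℝ^d: γ_a(S) ≤ exp(ε)·γ_b(S) + Φ(μ/2 − ε/μ) − exp(ε)·Φ(−μ/2 − ε/μ). This is the exact (ε, δ)-differential-privacy curve of the μ-GDP Gaussian mechanism with ℓ2-sensitivity Δ and standard deviation Δ/μ. -/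

import Mathlib

open MeasureTheory ProbabilityTheory
open Real Set
open scoped NNReal ENNReal

/-- The standard Gaussian cumulative distribution function `Φ(t) = N(0,1)((−∞, t])`. -/
noncomputable def stdGaussianCDF (t : ℝ) : ℝ := (gaussianReal 0 1 (Set.Iic t)).toReal

lemma stdGaussianCDF_eq_integral (t : ℝ) :
    stdGaussianCDF t = ∫ x in Set.Iic t, gaussianPDFReal 0 1 x := by
  rw [stdGaussianCDF, gaussianReal_apply_eq_integral _ one_ne_zero, ENNReal.toReal_ofReal]
  exact integral_nonneg fun x => gaussianPDFReal_nonneg _ _ _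

lemma gaussianReal_singleton (m x : ℝ) {v : ℝ≥0} (hv : v ≠ 0) : gaussianReal m v {x} = 0 := by
  rw [gaussianReal_apply _ hv]
  exact setLIntegral_measure_zero _ _ (measure_singleton x)

lemma gaussianReal_Ici (m u : ℝ) {v : ℝ≥0} (hv : v ≠ 0) :
    gaussianReal m v (Set.Ici u) = gaussianReal m v (Set.Ioi u) := by
  refine le_antisymm ?_ (measure_mono Set.Ioi_subset_Ici_self)
  rw [← Set.Ioi_union_left]
  calc gaussianReal m v (Set.Ioi u ∪ {u}) ≤ _ + _ := measure_union_le _ _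
  _ = gaussianReal m v (Set.Ioi u) := by rw [gaussianReal_singleton m u hv, add_zero]

lemma stdGaussianCDF_neg (u : ℝ) : stdGaussianCDF (-u) = 1 - stdGaussianCDF u := by
  have hmap : (gaussianReal 0 1).map (fun x : ℝ => (-1 : ℝ) * x) = gaussianReal 0 1 := by
    rw [gaussianReal_map_const_mul (-1 : ℝ)]
    congr 1
    · ring
    · ext
      norm_num
  have h1 : gaussianReal 0 1 (Set.Iic (-u)) = gaussianReal 0 1 (Set.Ioi u) := by
    conv_lhs => rw [← hmap]
    rw [Measure.map_apply (by fun_prop) measurableSet_Iic]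
    have : (fun x : ℝ => (-1 : ℝ) * x) ⁻¹' Set.Iic (-u) = Set.Ici u := by
      ext x; simp
    rw [this, gaussianReal_Ici _ _ one_ne_zero]
  have h2 : gaussianReal 0 1 (Set.Ioi u) = 1 - gaussianReal 0 1 (Set.Iic u) := by
    rw [← Set.compl_Iic, measure_compl measurableSet_Iic (measure_ne_top _ _), measure_univ]
  rw [stdGaussianCDF, stdGaussianCDF, h1, h2, ENNReal.toReal_sub_of_le
    (measure_mono (Set.subset_univ _) |>.trans_eq (measure_univ)) ENNReal.one_ne_top]
  simp

lemma gaussianReal_Ioi_toReal (m t : ℝ) {v : ℝ≥0} (hv : v ≠ 0) :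
    ((gaussianReal m v) (Set.Ioi t)).toReal = stdGaussianCDF ((m - t) / Real.sqrt v) := by
  have hvpos : (0 : ℝ) < (v : ℝ) := by positivity
  have hs : (0 : ℝ) < Real.sqrt v := Real.sqrt_pos.mpr hvpos
  have hmap1 : (gaussianReal 0 1).map (fun x : ℝ => Real.sqrt v * x) = gaussianReal 0 v := by
    rw [gaussianReal_map_const_mul (Real.sqrt v)]
    congr 1
    · ring
    · ext
      simp [Real.sq_sqrt hvpos.le]
  have hmap2 : (gaussianReal 0 v).map (· + m) = gaussianReal m v := by
    rw [gaussianReal_map_add_const m, zero_add]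
  have h1 : gaussianReal m v (Set.Ioi t) = gaussianReal 0 1 (Set.Ioi ((t - m) / Real.sqrt v)) := by
    rw [← hmap2, Measure.map_apply (by fun_prop) measurableSet_Ioi]
    have : (· + m) ⁻¹' Set.Ioi t = Set.Ioi (t - m) := by ext x; simp [lt_sub_iff_add_lt]
    rw [this, ← hmap1, Measure.map_apply (by fun_prop) measurableSet_Ioi]
    congr 1
    ext x
    simp only [Set.mem_preimage, Set.mem_Ioi]
    rw [div_lt_iff₀ hs, mul_comm]
  have h2 : gaussianReal 0 1 (Set.Ioi ((t - m) / Real.sqrt v))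
      = 1 - gaussianReal 0 1 (Set.Iic ((t - m) / Real.sqrt v)) := by
    rw [← Set.compl_Iic, measure_compl measurableSet_Iic (measure_ne_top _ _), measure_univ]
  have := stdGaussianCDF_neg ((t - m) / Real.sqrt v)
  have hneg : -((t - m) / Real.sqrt v) = (m - t) / Real.sqrt v := by ring
  rw [h1, h2, ENNReal.toReal_sub_of_le
    (measure_mono (Set.subset_univ _) |>.trans_eq (measure_univ)) ENNReal.one_ne_top]
  rw [hneg] at this
  simp only [ENNReal.toReal_one]
  rw [this]
  rfl

lemma continuous_gaussianPDFReal01 : Continuous (gaussianPDFReal 0 1) := by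
  rw [gaussianPDFReal_def]
  fun_prop

lemma hasDerivAt_stdGaussianCDF (t : ℝ) :
    HasDerivAt stdGaussianCDF (gaussianPDFReal 0 1 t) t := by
  have hint : IntervalIntegrable (gaussianPDFReal 0 1) volume 0 t :=
    (integrable_gaussianPDFReal 0 1).intervalIntegrable
  have heq : stdGaussianCDF = fun u : ℝ =>
      stdGaussianCDF 0 + ∫ x in (0:ℝ)..u, gaussianPDFReal 0 1 x := by
    funext u
    rw [stdGaussianCDF_eq_integral, stdGaussianCDF_eq_integral,
      ← intervalIntegral.integral_Iic_sub_Iic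
        ((integrable_gaussianPDFReal 0 1).integrableOn)
        ((integrable_gaussianPDFReal 0 1).integrableOn)]
    ring
  rw [heq]
  exact (intervalIntegral.integral_hasDerivAt_right hint
    (continuous_gaussianPDFReal01.stronglyMeasurableAtFilter _ _)
    continuous_gaussianPDFReal01.continuousAt).const_add _

lemma hasDerivAt_delta (ε : ℝ) {x : ℝ} (hx : 0 < x) :
    HasDerivAt (fun y => stdGaussianCDF (y/2 - ε/y) - Real.exp ε * stdGaussianCDF (-(y/2) - ε/y))
      (gaussianPDFReal 0 1 (x/2 - ε/x)) x := by
  have hinv : HasDerivAt (fun y : ℝ => ε / y) (-(ε / x ^ 2)) x := by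
    simp only [div_eq_mul_inv]
    have := (hasDerivAt_inv hx.ne').const_mul ε
    exact this.congr_deriv (by ring)
  have hu : HasDerivAt (fun y : ℝ => y/2 - ε/y) (1/2 + ε/x^2) x := by
    have := (hasDerivAt_id x).div_const 2 |>.sub hinv
    exact this.congr_deriv (by ring)
  have hw : HasDerivAt (fun y : ℝ => -(y/2) - ε/y) (-(1/2) + ε/x^2) x := by
    have := ((hasDerivAt_id x).div_const 2).neg.sub hinv
    exact this.congr_deriv (by ring)
  have h1 := (hasDerivAt_stdGaussianCDF (x/2 - ε/x)).comp x hu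
  have h2 := ((hasDerivAt_stdGaussianCDF (-(x/2) - ε/x)).comp x hw).const_mul (Real.exp ε)
  have key : Real.exp ε * gaussianPDFReal 0 1 (-(x/2) - ε/x) = gaussianPDFReal 0 1 (x/2 - ε/x) := by
    simp only [gaussianPDFReal, NNReal.coe_one, mul_one, sub_zero]
    rw [mul_comm (Real.exp ε), mul_assoc, ← Real.exp_add]
    congr 2
    field_simp
    ring
  refine (h1.sub h2).congr_deriv ?_
  rw [← key]
  ring

lemma delta_mono (ε : ℝ) {η μ : ℝ} (hη : 0 < η) (hημ : η ≤ μ) :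
    stdGaussianCDF (η/2 - ε/η) - Real.exp ε * stdGaussianCDF (-(η/2) - ε/η)
      ≤ stdGaussianCDF (μ/2 - ε/μ) - Real.exp ε * stdGaussianCDF (-(μ/2) - ε/μ) := by
  have hmono : StrictMonoOn
      (fun y => stdGaussianCDF (y/2 - ε/y) - Real.exp ε * stdGaussianCDF (-(y/2) - ε/y))
      (Set.Ioi 0) := by
    refine strictMonoOn_of_deriv_pos (convex_Ioi 0) ?_ ?_
    · exact fun x hx => (hasDerivAt_delta ε hx).differentiableAt.continuousAt.continuousWithinAt
    · intro x hx
      rw [isOpen_Ioi.interior_eq] at hx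
      rw [(hasDerivAt_delta ε hx).deriv]
      exact gaussianPDFReal_pos _ _ _ one_ne_zero
  rcases eq_or_lt_of_le hημ with rfl | h
  · exact le_rfl
  · exact (hmono hη (hη.trans h) h).le

lemma delta_nonneg {ε μ : ℝ} (hε : 0 ≤ ε) (hμ : 0 < μ) :
    Real.exp ε * stdGaussianCDF (-(μ/2) - ε/μ) ≤ stdGaussianCDF (μ/2 - ε/μ) := by
  set t : ℝ := (ε + μ^2/2)/μ with ht
  have key : ENNReal.ofReal (Real.exp ε) * gaussianReal 0 1 (Set.Ioi t)
      ≤ gaussianReal μ 1 (Set.Ioi t) := by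
    rw [gaussianReal_apply _ one_ne_zero, gaussianReal_apply _ one_ne_zero,
      ← lintegral_const_mul _ (measurable_gaussianPDF 0 1)]
    refine setLIntegral_mono (measurable_gaussianPDF μ 1) ?_
    intro x hx
    rw [Set.mem_Ioi] at hx
    rw [gaussianPDF, gaussianPDF, ← ENNReal.ofReal_mul (Real.exp_pos ε).le]
    refine ENNReal.ofReal_le_ofReal ?_
    rw [gaussianPDFReal, gaussianPDFReal, mul_comm (Real.exp ε), mul_assoc, ← Real.exp_add]
    refine mul_le_mul_of_nonneg_left (Real.exp_le_exp.mpr ?_) (by positivity)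
    have : t ≤ x := hx.le
    have h1 : ε + μ^2/2 ≤ μ * x := by
      rw [ht] at this
      calc ε + μ^2/2 = ((ε + μ^2/2)/μ) * μ := by rw [div_mul_cancel₀ _ hμ.ne']
      _ ≤ x * μ := by nlinarith
      _ = μ * x := by ring
    push_cast
    nlinarith
  have h1 : ((gaussianReal μ 1 : Measure ℝ) (Set.Ioi t)).toReal = stdGaussianCDF (μ/2 - ε/μ) := by
    rw [gaussianReal_Ioi_toReal _ _ one_ne_zero]
    have harg : (μ - t)/Real.sqrt ((1:ℝ≥0):ℝ) = μ/2 - ε/μ := by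
      rw [NNReal.coe_one, Real.sqrt_one, div_one, ht]
      field_simp
      ring
    rw [harg]
  have h2 : ((gaussianReal 0 1 : Measure ℝ) (Set.Ioi t)).toReal
      = stdGaussianCDF (-(μ/2) - ε/μ) := by
    rw [gaussianReal_Ioi_toReal _ _ one_ne_zero]
    have harg : ((0:ℝ) - t)/Real.sqrt ((1:ℝ≥0):ℝ) = -(μ/2) - ε/μ := by
      rw [NNReal.coe_one, Real.sqrt_one, div_one, ht]
      field_simp
      ring
    rw [harg]
  have := ENNReal.toReal_mono (measure_ne_top _ _) key
  rw [ENNReal.toReal_mul, ENNReal.toReal_ofReal (Real.exp_pos ε).le, h1, h2] at this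
  exact this

lemma integral_gaussianPDFReal_conv (m₁ m₂ : ℝ) {v₁ v₂ : ℝ≥0} (h₁ : v₁ ≠ 0) (h₂ : v₂ ≠ 0)
    (y : ℝ) :
    (∫ x : ℝ, gaussianPDFReal m₂ v₂ (y - x) * gaussianPDFReal m₁ v₁ x)
      = gaussianPDFReal (m₁ + m₂) (v₁ + v₂) y := by
  have hw₁ : (0:ℝ) < (v₁:ℝ) := by positivity
  have hw₂ : (0:ℝ) < (v₂:ℝ) := by positivity
  set w₁ : ℝ := (v₁:ℝ) with hw1d
  set w₂ : ℝ := (v₂:ℝ) with hw2d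
  have hw12 : (0:ℝ) < w₁ + w₂ := by linarith
  have hB : (0:ℝ) < (w₁+w₂)/(2*w₁*w₂) := by positivity
  have hpt : ∀ x : ℝ, gaussianPDFReal m₂ v₂ (y - x) * gaussianPDFReal m₁ v₁ x
      = ((Real.sqrt (2*π*w₁))⁻¹ * (Real.sqrt (2*π*w₂))⁻¹
          * Real.exp (-((y-m₁-m₂)^2/(2*(w₁+w₂)))))
        * Real.exp ((-((w₁+w₂)/(2*w₁*w₂)))
            * (x - (m₁ + w₁*(y-m₁-m₂)/(w₁+w₂)))^2) := by
    intro x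
    simp only [gaussianPDFReal]
    have hexp : Real.exp (-(y - x - m₂)^2 / (2*w₂)) * Real.exp (-(x - m₁)^2 / (2*w₁))
        = Real.exp (-((y-m₁-m₂)^2/(2*(w₁+w₂))))
          * Real.exp ((-((w₁+w₂)/(2*w₁*w₂)))
              * (x - (m₁ + w₁*(y-m₁-m₂)/(w₁+w₂)))^2) := by
      rw [← Real.exp_add, ← Real.exp_add]
      congr 1
      field_simp
      ring
    calc ((Real.sqrt (2*π*w₂))⁻¹ * Real.exp (-(y - x - m₂)^2 / (2*w₂)))
          * ((Real.sqrt (2*π*w₁))⁻¹ * Real.exp (-(x - m₁)^2 / (2*w₁)))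
        = ((Real.sqrt (2*π*w₁))⁻¹ * (Real.sqrt (2*π*w₂))⁻¹)
          * (Real.exp (-(y - x - m₂)^2 / (2*w₂)) * Real.exp (-(x - m₁)^2 / (2*w₁))) := by
          ring
      _ = _ := by rw [hexp]; ring
  simp_rw [hpt]
  rw [MeasureTheory.integral_const_mul]
  have hgauss : (∫ x : ℝ, Real.exp ((-((w₁+w₂)/(2*w₁*w₂)))
      * (x - (m₁ + w₁*(y-m₁-m₂)/(w₁+w₂)))^2))
      = Real.sqrt (π / ((w₁+w₂)/(2*w₁*w₂))) := by
    rw [← integral_gaussian ((w₁+w₂)/(2*w₁*w₂))]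
    exact integral_sub_right_eq_self (μ := volume)
      (fun x => Real.exp ((-((w₁+w₂)/(2*w₁*w₂))) * x^2)) (m₁ + w₁*(y-m₁-m₂)/(w₁+w₂))
  rw [hgauss]
  simp only [gaussianPDFReal]
  have hcast : ((v₁ + v₂ : ℝ≥0) : ℝ) = w₁ + w₂ := by push_cast; rfl
  rw [hcast]
  have hconst : (Real.sqrt (2*π*w₁))⁻¹ * (Real.sqrt (2*π*w₂))⁻¹
      * Real.sqrt (π / ((w₁+w₂)/(2*w₁*w₂))) = (Real.sqrt (2*π*(w₁+w₂)))⁻¹ := by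
    rw [← Real.sqrt_inv, ← Real.sqrt_inv, ← Real.sqrt_inv,
      ← Real.sqrt_mul (by positivity), ← Real.sqrt_mul (by positivity)]
    congr 1
    field_simp
  calc (Real.sqrt (2*π*w₁))⁻¹ * (Real.sqrt (2*π*w₂))⁻¹
        * Real.exp (-((y-m₁-m₂)^2/(2*(w₁+w₂))))
        * Real.sqrt (π / ((w₁+w₂)/(2*w₁*w₂)))
      = ((Real.sqrt (2*π*w₁))⁻¹ * (Real.sqrt (2*π*w₂))⁻¹
          * Real.sqrt (π / ((w₁+w₂)/(2*w₁*w₂)))) * Real.exp (-((y-m₁-m₂)^2/(2*(w₁+w₂)))) := by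
        ring
    _ = _ := by
        rw [hconst]
        congr 1
        ring_nf

lemma gaussianReal_map_add (m₁ m₂ : ℝ) (v₁ v₂ : ℝ≥0) :
    Measure.map (fun p : ℝ × ℝ => p.1 + p.2) ((gaussianReal m₁ v₁).prod (gaussianReal m₂ v₂))
      = gaussianReal (m₁ + m₂) (v₁ + v₂) := by
  by_cases h₁ : v₁ = 0
  · subst h₁
    rw [gaussianReal_zero_var, Measure.dirac_prod, zero_add,
      Measure.map_map (by fun_prop) (by fun_prop)]
    have : ((fun p : ℝ × ℝ => p.1 + p.2) ∘ Prod.mk m₁) = (m₁ + ·) := rfl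
    rw [this, gaussianReal_map_const_add, add_comm]
  by_cases h₂ : v₂ = 0
  · subst h₂
    rw [gaussianReal_zero_var, Measure.prod_dirac, add_zero,
      Measure.map_map (by fun_prop) (by fun_prop)]
    have : ((fun p : ℝ × ℝ => p.1 + p.2) ∘ (fun x : ℝ => (x, m₂))) = (· + m₂) := rfl
    rw [this, gaussianReal_map_add_const]
  -- main case
  have h12 : v₁ + v₂ ≠ 0 := by simp [h₁]
  have hmeas2 : Measurable fun p : ℝ × ℝ => gaussianPDF (m₂ + p.1) v₂ p.2 := by
    simp only [gaussianPDF, gaussianPDFReal]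
    fun_prop
  ext s hs
  rw [Measure.map_apply (by fun_prop) hs,
    Measure.prod_apply (hs.preimage (by fun_prop))]
  have hfib : ∀ x : ℝ,
      (gaussianReal m₂ v₂) (Prod.mk x ⁻¹' ((fun p : ℝ × ℝ => p.1 + p.2) ⁻¹' s))
        = ∫⁻ y in s, gaussianPDF (m₂ + x) v₂ y := by
    intro x
    have hpre : (Prod.mk x ⁻¹' ((fun p : ℝ × ℝ => p.1 + p.2) ⁻¹' s)) = (x + ·) ⁻¹' s := rfl
    rw [hpre, ← Measure.map_apply (by fun_prop) hs, gaussianReal_map_const_add x,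
      gaussianReal_apply _ h₂]
  simp_rw [hfib]
  rw [lintegral_lintegral_swap (by exact hmeas2.aemeasurable)]
  have hinner : ∀ y : ℝ, (∫⁻ x, gaussianPDF (m₂ + x) v₂ y ∂(gaussianReal m₁ v₁))
      = gaussianPDF (m₁ + m₂) (v₁ + v₂) y := by
    intro y
    rw [gaussianReal_of_var_ne_zero _ h₁,
      lintegral_withDensity_eq_lintegral_mul _ (measurable_gaussianPDF _ _) (by simp only [gaussianPDF, gaussianPDFReal]; fun_prop)]
    have hpt : ∀ x : ℝ, (gaussianPDF m₁ v₁ * fun x => gaussianPDF (m₂ + x) v₂ y) x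
        = ENNReal.ofReal (gaussianPDFReal m₂ v₂ (y - x) * gaussianPDFReal m₁ v₁ x) := by
      intro x
      simp only [Pi.mul_apply, gaussianPDF]
      rw [← ENNReal.ofReal_mul (gaussianPDFReal_nonneg _ _ _), ← gaussianPDFReal_sub,
        mul_comm]
    simp_rw [hpt]
    rw [← ofReal_integral_eq_lintegral_ofReal ?hint ?hnn]
    · rw [integral_gaussianPDFReal_conv m₁ m₂ h₁ h₂ y]
      rfl
    case hnn =>
      exact ae_of_all _ fun x =>
        mul_nonneg (gaussianPDFReal_nonneg _ _ _) (gaussianPDFReal_nonneg _ _ _)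
    case hint =>
      refine Integrable.bdd_mul (c := (Real.sqrt (2 * π * v₂))⁻¹) (integrable_gaussianPDFReal m₁ v₁) ?_ ?_
      · apply Continuous.aestronglyMeasurable
        simp only [gaussianPDFReal]
        fun_prop
      · refine ae_of_all _ fun x => ?_
        rw [Real.norm_eq_abs, abs_of_nonneg (gaussianPDFReal_nonneg _ _ _)]
        simp only [gaussianPDFReal]
        calc (Real.sqrt (2*π*(v₂:ℝ)))⁻¹ * Real.exp (-(y - x - m₂)^2 / (2*(v₂:ℝ)))
            ≤ (Real.sqrt (2*π*(v₂:ℝ)))⁻¹ * 1 := by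
              refine mul_le_mul_of_nonneg_left ?_ (by positivity)
              rw [Real.exp_le_one_iff]
              have : (0:ℝ) < (v₂:ℝ) := by positivity
              apply div_nonpos_of_nonpos_of_nonneg <;> nlinarith [sq_nonneg (y - x - m₂)]
          _ = (Real.sqrt (2*π*(v₂:ℝ)))⁻¹ := mul_one _
  simp_rw [hinner]
  rw [gaussianReal_apply _ h12]

lemma map_sum_pi_gaussian (n : ℕ) (c m : Fin n → ℝ) (v : ℝ≥0) :
    Measure.map (fun x : Fin n → ℝ => ∑ i, c i * x i)
        (Measure.pi fun i => gaussianReal (m i) v)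
      = gaussianReal (∑ i, c i * m i) ((∑ i, (c i)^2).toNNReal * v) := by
  induction n with
  | zero =>
      simp only [Finset.univ_eq_empty, Finset.sum_empty, Real.toNNReal_zero, zero_mul]
      rw [Measure.map_const, measure_univ, one_smul, gaussianReal_zero_var]
  | succ n ih =>
      set e := MeasurableEquiv.piFinSuccAbove (fun _ : Fin (n+1) => ℝ) 0 with he
      have hpres := measurePreserving_piFinSuccAbove
        (fun i : Fin (n+1) => gaussianReal (m i) v) 0
      have hmap : (Measure.pi fun i => gaussianReal (m i) v)
          = Measure.map e.symm ((gaussianReal (m 0) v).prod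
              (Measure.pi fun j : Fin n => gaussianReal (m ((0:Fin (n+1)).succAbove j)) v)) := by
        rw [← hpres.map_eq, MeasurableEquiv.map_symm_map]
      have hsum_meas : Measurable (fun x : Fin (n+1) → ℝ => ∑ i, c i * x i) := by fun_prop
      rw [hmap, Measure.map_map hsum_meas e.symm.measurable]
      have hcomp : ((fun x : Fin (n+1) → ℝ => ∑ i, c i * x i) ∘ e.symm)
          = (fun p : ℝ × ℝ => p.1 + p.2) ∘
            (Prod.map (fun x : ℝ => c 0 * x)
              (fun x : Fin n → ℝ => ∑ j, c ((0:Fin (n+1)).succAbove j) * x j)) := by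
        funext p
        simp only [Function.comp_apply, Prod.map]
        have hesymm : e.symm p = Fin.insertNth (α := fun _ => ℝ) 0 p.1 p.2 := rfl
        rw [hesymm, Fin.sum_univ_succAbove
          (fun i => c i * Fin.insertNth (α := fun _ => ℝ) 0 p.1 p.2 i) 0]
        simp [Fin.insertNth_apply_same, Fin.insertNth_apply_succAbove]
      rw [hcomp, ← Measure.map_map (by fun_prop) (by fun_prop),
        ← Measure.map_prod_map _ _ (by fun_prop) (by fun_prop),
        gaussianReal_map_const_mul, ih (fun j => c ((0:Fin (n+1)).succAbove j))
          (fun j => m ((0:Fin (n+1)).succAbove j)), gaussianReal_map_add]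
      congr 1
      · rw [Fin.sum_univ_succAbove (fun i => c i * m i) 0]
      · rw [Fin.sum_univ_succAbove (fun i => (c i)^2) 0]
        apply NNReal.coe_injective
        push_cast
        rw [Real.coe_toNNReal _ (add_nonneg (sq_nonneg _)
            (Finset.sum_nonneg fun _ _ => sq_nonneg _)),
          Real.coe_toNNReal _ (Finset.sum_nonneg fun _ _ => sq_nonneg _)]
        ring

lemma map_withDensity_equiv {α β : Type*} [MeasurableSpace α] [MeasurableSpace β]
    (e : α ≃ᵐ β) (μ : Measure α) (f : β → ℝ≥0∞) (hf : Measurable f) :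
    Measure.map e (μ.withDensity (fun a => f (e a))) = (Measure.map e μ).withDensity f := by
  ext s hs
  rw [Measure.map_apply e.measurable hs, withDensity_apply _ (hs.preimage e.measurable),
    withDensity_apply _ hs, setLIntegral_map hs hf e.measurable]

lemma prod_withDensity {α β : Type*} [MeasurableSpace α] [MeasurableSpace β]
    (μ : Measure α) (ν : Measure β) [SigmaFinite μ] [SigmaFinite ν]
    (f : α → ℝ≥0∞) (g : β → ℝ≥0∞) (hf : Measurable f) (hg : Measurable g)
    (h1 : SigmaFinite (μ.withDensity f)) (h2 : SigmaFinite (ν.withDensity g)) :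
    (μ.withDensity f).prod (ν.withDensity g)
      = (μ.prod ν).withDensity (fun p => f p.1 * g p.2) := by
  refine Measure.prod_eq fun s t hs ht => ?_
  rw [withDensity_apply _ (hs.prod ht), ← Measure.prod_restrict,
    lintegral_prod_mul hf.aemeasurable hg.aemeasurable,
    withDensity_apply _ hs, withDensity_apply _ ht]

lemma pi_gaussian_eq_withDensity (n : ℕ) (m : Fin n → ℝ) {v : ℝ≥0} (hv : v ≠ 0) :
    Measure.pi (fun i => gaussianReal (m i) v)
      = (Measure.pi fun _ : Fin n => (volume : Measure ℝ)).withDensity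
          (fun x => ∏ i, gaussianPDF (m i) v (x i)) := by
  induction n with
  | zero =>
      have h1 : (fun x : Fin 0 → ℝ => ∏ i, gaussianPDF (m i) v (x i))
          = (1 : (Fin 0 → ℝ) → ℝ≥0∞) := by
        funext x; simp
      rw [h1, withDensity_one]
      ext s hs
      rcases s.eq_empty_or_nonempty with rfl | h
      · simp
      · have hsu : s = Set.univ := h.eq_univ
        subst hsu
        rw [Measure.pi_univ, Measure.pi_univ]
        simp
  | succ n ih =>
      set e := MeasurableEquiv.piFinSuccAbove (fun _ : Fin (n+1) => ℝ) 0 with he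
      set F := fun x : Fin (n+1) → ℝ => ∏ i, gaussianPDF (m i) v (x i) with hF
      have hFmeas : Measurable F :=
        Finset.measurable_prod Finset.univ
          (fun i _ => (measurable_gaussianPDF _ _).comp (measurable_pi_apply i))
      have hpres := measurePreserving_piFinSuccAbove
        (fun i : Fin (n+1) => gaussianReal (m i) v) 0
      have hpresvol := measurePreserving_piFinSuccAbove
        (fun _ : Fin (n+1) => (volume : Measure ℝ)) 0
      have hmap : (Measure.pi fun i => gaussianReal (m i) v)
          = Measure.map e.symm ((gaussianReal (m 0) v).prod
              (Measure.pi fun j : Fin n => gaussianReal (m ((0:Fin (n+1)).succAbove j)) v)) := by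
        rw [← hpres.map_eq, MeasurableEquiv.map_symm_map]
      have ihe := ih (fun j => m ((0:Fin (n+1)).succAbove j))
      have hWD1 : SigmaFinite ((volume : Measure ℝ).withDensity (gaussianPDF (m 0) v)) := by
        rw [← gaussianReal_of_var_ne_zero _ hv]; infer_instance
      have hWD2 : SigmaFinite ((Measure.pi fun _ : Fin n => (volume : Measure ℝ)).withDensity
          (fun x => ∏ j, gaussianPDF (m ((0:Fin (n+1)).succAbove j)) v (x j))) := by
        rw [← ihe]; infer_instance
      have hg2meas : Measurable (fun x : Fin n → ℝ =>
          ∏ j, gaussianPDF (m ((0:Fin (n+1)).succAbove j)) v (x j)) :=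
        Finset.measurable_prod Finset.univ
          (fun j _ => (measurable_gaussianPDF _ _).comp (measurable_pi_apply j))
      have hprod := prod_withDensity (volume : Measure ℝ)
        (Measure.pi fun _ : Fin n => (volume : Measure ℝ))
        (gaussianPDF (m 0) v)
        (fun x : Fin n → ℝ => ∏ j, gaussianPDF (m ((0:Fin (n+1)).succAbove j)) v (x j))
        (measurable_gaussianPDF _ _) hg2meas hWD1 hWD2
      rw [hmap, gaussianReal_of_var_ne_zero _ hv, ihe, hprod]
      have hcompose : (fun p : ℝ × (Fin n → ℝ) =>
            gaussianPDF (m 0) v p.1 * ∏ j, gaussianPDF (m ((0:Fin (n+1)).succAbove j)) v (p.2 j))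
          = fun p => F (e.symm p) := by
        funext p
        have hesymm : e.symm p = Fin.insertNth (α := fun _ => ℝ) 0 p.1 p.2 := rfl
        show _ = F (e.symm p)
        rw [hesymm, hF]
        show _ = ∏ i, gaussianPDF (m i) v (Fin.insertNth (α := fun _ => ℝ) 0 p.1 p.2 i)
        rw [Fin.prod_univ_succAbove
          (fun i => gaussianPDF (m i) v (Fin.insertNth (α := fun _ => ℝ) 0 p.1 p.2 i)) 0]
        simp [Fin.insertNth_apply_same, Fin.insertNth_apply_succAbove]
      rw [hcompose, map_withDensity_equiv e.symm _ F hFmeas]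
      congr 1
      rw [← hpresvol.map_eq, MeasurableEquiv.map_symm_map]

/-- The exact (ε, δ)-DP curve of the μ-GDP Gaussian mechanism with ℓ2-sensitivity `Δ` and
standard deviation `σ = Δ/μ`: for `‖a − b‖₂ ≤ Δ`, `ε ≥ 0`, and measurable `S`,
`γ_a(S) ≤ exp(ε)·γ_b(S) + Φ(μ/2 − ε/μ) − exp(ε)·Φ(−μ/2 − ε/μ)`. -/
theorem gdp_gaussian_mechanism (d : ℕ) (hd : 1 ≤ d) (Δ μ : ℝ) (hΔ : 0 < Δ) (hμ : 0 < μ)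
    (a b : Fin d → ℝ) (hsens : Real.sqrt (∑ i, (a i - b i) ^ 2) ≤ Δ)
    (ε : ℝ) (hε : 0 ≤ ε) (S : Set (Fin d → ℝ)) (hS : MeasurableSet S) :
    ((Measure.pi fun i : Fin d =>
        gaussianReal (a i) (Real.toNNReal ((Δ / μ) ^ 2))) S).toReal ≤
      Real.exp ε *
          ((Measure.pi fun i : Fin d =>
            gaussianReal (b i) (Real.toNNReal ((Δ / μ) ^ 2))) S).toReal +
        stdGaussianCDF (μ / 2 - ε / μ) - Real.exp ε * stdGaussianCDF (-(μ / 2) - ε / μ) := by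
  have hσpos : 0 < Δ / μ := div_pos hΔ hμ
  set σ : ℝ := Δ / μ with hσ
  set v : ℝ≥0 := Real.toNNReal (σ ^ 2) with hv
  have hvne : v ≠ 0 := by
    rw [hv, ne_eq, Real.toNNReal_eq_zero, not_le]
    positivity
  have hvcoe : (v : ℝ) = σ ^ 2 := Real.coe_toNNReal _ (sq_nonneg σ)
  set γa := Measure.pi fun i : Fin d => gaussianReal (a i) v with hγa
  set γb := Measure.pi fun i : Fin d => gaussianReal (b i) v with hγb
  haveI hPa : IsProbabilityMeasure γa := by rw [hγa]; infer_instance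
  haveI hPb : IsProbabilityMeasure γb := by rw [hγb]; infer_instance
  set K : ℝ := Real.exp ε with hK
  have hKpos : 0 < K := Real.exp_pos ε
  by_cases hab : a = b
  · subst hab
    have h1 : (γa S).toReal ≤ K * (γa S).toReal :=
      le_mul_of_one_le_left ENNReal.toReal_nonneg (Real.one_le_exp hε)
    have h2 := delta_nonneg hε hμ
    rw [hK] at h1
    linarith
  · set c : Fin d → ℝ := fun i => a i - b i with hc
    have hsens' : Real.sqrt (∑ i, c i ^ 2) ≤ Δ := hsens
    have hκsq_pos : 0 < ∑ i, c i ^ 2 := by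
      rcases Function.ne_iff.mp hab with ⟨i, hi⟩
      have hci : c i ≠ 0 := sub_ne_zero.mpr hi
      exact Finset.sum_pos' (fun j _ => sq_nonneg _)
        ⟨i, Finset.mem_univ i, by positivity⟩
    set κ : ℝ := Real.sqrt (∑ i, c i ^ 2) with hκ
    have hκpos : 0 < κ := Real.sqrt_pos.mpr hκsq_pos
    have hκsq : κ ^ 2 = ∑ i, c i ^ 2 := Real.sq_sqrt hκsq_pos.le
    set η : ℝ := κ / σ with hη
    have hηpos : 0 < η := div_pos hκpos hσpos
    have hημ : η ≤ μ := by
      rw [hη, hσ, div_le_iff₀ (by positivity)]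
      calc κ ≤ Δ := hsens'
        _ = μ * (Δ / μ) := by field_simp
    set s0 : ℝ := ∑ i, c i * ((a i + b i) / 2) with hs0
    set t : ℝ := ε * σ ^ 2 + s0 with ht
    set L : (Fin d → ℝ) → ℝ := fun x => ∑ i, c i * x i with hL
    have hLmeas : Measurable L := by
      rw [hL]; exact Finset.measurable_sum _ fun i _ => (measurable_pi_apply i).const_mul _
    set E : Set (Fin d → ℝ) := L ⁻¹' Set.Ioi t with hE
    have hEmeas : MeasurableSet E := hLmeas measurableSet_Ioi
    -- pointwise density ratio
    have hratio : ∀ x : Fin d → ℝ, ∏ i, gaussianPDFReal (a i) v (x i)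
        = Real.exp ((L x - s0) / σ ^ 2) * ∏ i, gaussianPDFReal (b i) v (x i) := by
      intro x
      simp only [gaussianPDFReal, hvcoe]
      rw [Finset.prod_mul_distrib, Finset.prod_mul_distrib, ← Real.exp_sum, ← Real.exp_sum]
      have hexp : ∑ i, -(x i - a i) ^ 2 / (2 * σ ^ 2)
          = (L x - s0) / σ ^ 2 + ∑ i, -(x i - b i) ^ 2 / (2 * σ ^ 2) := by
        rw [hL, hs0, ← Finset.sum_sub_distrib, Finset.sum_div, ← Finset.sum_add_distrib]
        refine Finset.sum_congr rfl fun i _ => ?_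
        have hci : c i = a i - b i := rfl
        rw [hci]
        field_simp
        ring
      rw [hexp, Real.exp_add]
      ring
    have hprodpdf : ∀ (m : Fin d → ℝ) (x : Fin d → ℝ), (∏ i, gaussianPDF (m i) v (x i))
        = ENNReal.ofReal (∏ i, gaussianPDFReal (m i) v (x i)) := by
      intro m x
      rw [ENNReal.ofReal_prod_of_nonneg fun i _ => gaussianPDFReal_nonneg _ _ _]
      rfl
    have hprodmeas : ∀ m : Fin d → ℝ, Measurable fun x : Fin d → ℝ =>
        ∏ i, gaussianPDF (m i) v (x i) := fun m =>
      Finset.measurable_prod Finset.univ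
        (fun i _ => (measurable_gaussianPDF _ _).comp (measurable_pi_apply i))
    have key_le : ∀ T : Set (Fin d → ℝ), MeasurableSet T → T ⊆ Eᶜ →
        γa T ≤ ENNReal.ofReal K * γb T := by
      intro T hT hTE
      rw [hγa, hγb, pi_gaussian_eq_withDensity d a hvne, pi_gaussian_eq_withDensity d b hvne,
        withDensity_apply _ hT, withDensity_apply _ hT,
        ← lintegral_const_mul _ (hprodmeas b)]
      refine setLIntegral_mono ((hprodmeas b).const_mul _) fun x hx => ?_
      have hxE : L x ≤ t := by
        have := hTE hx
        rw [hE] at this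
        simpa using this
      rw [hprodpdf a x, hprodpdf b x, ← ENNReal.ofReal_mul hKpos.le]
      refine ENNReal.ofReal_le_ofReal ?_
      rw [hratio x]
      refine mul_le_mul_of_nonneg_right ?_
        (Finset.prod_nonneg fun i _ => gaussianPDFReal_nonneg _ _ _)
      rw [hK]
      refine Real.exp_le_exp.mpr ?_
      rw [div_le_iff₀ (by positivity)]
      rw [ht] at hxE
      linarith
    have key_ge : ∀ T : Set (Fin d → ℝ), MeasurableSet T → T ⊆ E →
        ENNReal.ofReal K * γb T ≤ γa T := by
      intro T hT hTE
      rw [hγa, hγb, pi_gaussian_eq_withDensity d a hvne, pi_gaussian_eq_withDensity d b hvne,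
        withDensity_apply _ hT, withDensity_apply _ hT,
        ← lintegral_const_mul _ (hprodmeas b)]
      refine setLIntegral_mono (hprodmeas a) fun x hx => ?_
      have hxE : t < L x := hTE hx
      rw [hprodpdf a x, hprodpdf b x, ← ENNReal.ofReal_mul hKpos.le]
      refine ENNReal.ofReal_le_ofReal ?_
      rw [hratio x]
      refine mul_le_mul_of_nonneg_right ?_
        (Finset.prod_nonneg fun i _ => gaussianPDFReal_nonneg _ _ _)
      rw [hK]
      refine Real.exp_le_exp.mpr ?_
      rw [le_div_iff₀ (by positivity)]
      rw [ht] at hxE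
      linarith
    -- computing the measures of E
    have hwne : ((∑ i, c i ^ 2).toNNReal * v) ≠ 0 := by
      refine mul_ne_zero ?_ hvne
      rw [ne_eq, Real.toNNReal_eq_zero, not_le]
      exact hκsq_pos
    have hsqrtw : Real.sqrt (((∑ i, c i ^ 2).toNNReal * v : ℝ≥0) : ℝ) = κ * σ := by
      push_cast
      rw [Real.coe_toNNReal _ hκsq_pos.le, hvcoe, Real.sqrt_mul hκsq_pos.le,
        Real.sqrt_sq hσpos.le, hκ]
    have hγaE : (γa E).toReal = stdGaussianCDF (η / 2 - ε / η) := by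
      rw [hE, ← Measure.map_apply hLmeas measurableSet_Ioi, hγa, hL,
        map_sum_pi_gaussian d c a v, gaussianReal_Ioi_toReal _ _ hwne, hsqrtw]
      congr 1
      have hnum : (∑ i, c i * a i) - s0 = (∑ i, c i ^ 2) / 2 := by
        rw [hs0, ← Finset.sum_sub_distrib, Finset.sum_div]
        refine Finset.sum_congr rfl fun i _ => ?_
        have hci : c i = a i - b i := rfl
        rw [hci]; ring
      rw [ht]
      rw [show (∑ i, c i * a i) - (ε * σ ^ 2 + s0) = ((∑ i, c i * a i) - s0) - ε * σ ^ 2 by ring,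
        hnum, ← hκsq, hη]
      field_simp
    have hγbE : (γb E).toReal = stdGaussianCDF (-(η / 2) - ε / η) := by
      rw [hE, ← Measure.map_apply hLmeas measurableSet_Ioi, hγb, hL,
        map_sum_pi_gaussian d c b v, gaussianReal_Ioi_toReal _ _ hwne, hsqrtw]
      congr 1
      have hnum : (∑ i, c i * b i) - s0 = -((∑ i, c i ^ 2) / 2) := by
        rw [hs0, ← Finset.sum_sub_distrib]
        have hterm : ∀ i ∈ Finset.univ, c i * b i - c i * ((a i + b i) / 2)
            = -(c i ^ 2 / 2) := by
          intro i _
          have hci : c i = a i - b i := rfl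
          rw [hci]; ring
        rw [Finset.sum_congr rfl hterm]
        rw [Finset.sum_neg_distrib, Finset.sum_div]
      rw [ht]
      rw [show (∑ i, c i * b i) - (ε * σ ^ 2 + s0) = ((∑ i, c i * b i) - s0) - ε * σ ^ 2 by ring,
        hnum, ← hκsq, hη]
      field_simp
    -- real arithmetic assembly
    have hfin : ∀ (ν : Measure (Fin d → ℝ)) [IsProbabilityMeasure ν] (T : Set (Fin d → ℝ)),
        ν T ≠ ⊤ := fun ν _ T => measure_ne_top ν T
    have hx2 : (γa (S \ E)).toReal ≤ K * (γb (S \ E)).toReal := by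
      have := key_le (S \ E) (hS.diff hEmeas) (fun x hx => hx.2)
      have h2 := ENNReal.toReal_mono (by
        exact ENNReal.mul_ne_top ENNReal.ofReal_ne_top (measure_ne_top _ _)) this
      rwa [ENNReal.toReal_mul, ENNReal.toReal_ofReal hKpos.le] at h2
    have hx3 : K * (γb (E \ S)).toReal ≤ (γa (E \ S)).toReal := by
      have := key_ge (E \ S) (hEmeas.diff hS) (fun x hx => hx.1)
      have h2 := ENNReal.toReal_mono (measure_ne_top _ _) this
      rwa [ENNReal.toReal_mul, ENNReal.toReal_ofReal hKpos.le] at h2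
    have hsplit : ∀ (ν : Measure (Fin d → ℝ)) [IsProbabilityMeasure ν]
        (A B : Set (Fin d → ℝ)), MeasurableSet A → MeasurableSet B →
        (ν A).toReal = (ν (A ∩ B)).toReal + (ν (A \ B)).toReal := by
      intro ν _ A B hA hB
      rw [← ENNReal.toReal_add (measure_ne_top _ _) (measure_ne_top _ _),
        ← measure_union (Disjoint.mono_left Set.inter_subset_right disjoint_sdiff_right)
          (hA.diff hB), Set.inter_union_diff]
    have hSa := hsplit γa S E hS hEmeas
    have hSb := hsplit γb S E hS hEmeas
    have hEa := hsplit γa E S hEmeas hS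
    have hEb := hsplit γb E S hEmeas hS
    rw [Set.inter_comm E S] at hEa hEb
    have hKSb : K * (γb S).toReal
        = K * (γb (S ∩ E)).toReal + K * (γb (S \ E)).toReal := by rw [hSb]; ring
    have hKEb : K * (γb E).toReal
        = K * (γb (S ∩ E)).toReal + K * (γb (E \ S)).toReal := by rw [hEb]; ring
    have hx1 : (γa (S ∩ E)).toReal ≤ K * (γb (S ∩ E)).toReal
        + ((γa E).toReal - K * (γb E).toReal) := by linarith
    have hdm := delta_mono ε hηpos hημ
    rw [← hK] at hdm
    have hKbE2 : K * (γb E).toReal = K * stdGaussianCDF (-(η / 2) - ε / η) := by rw [hγbE]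
    rw [hγaE] at hEa hx1
    linarith [hγaE, hγbE, hdm]
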